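/- Let f : [0,∞) → [0,∞] be a decreasing function with ∫₀¹ f(x) dx ≤ 1, and let p be a random variable with P(p ≤ t) ≤ t for all t ∈ [0,1]. Then for any α ∈ (0,1), E[f(p/α)] ≤ 1/α. -/

import Mathlib

open MeasureTheory Set ENNReal

lemma aux_ptwise (a : ℝ≥0∞) :
    ∫⁻ t in Set.Ioi (0:ℝ), ({t : ℝ | ENNReal.ofReal t < a}).indicator (1 : ℝ → ℝ≥0∞) t
      = a := by
  have hS : MeasurableSet {t : ℝ | ENNReal.ofReal t < a} :=
    ENNReal.measurable_ofReal (measurableSet_Iio (a := a))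
  rw [lintegral_indicator_one hS, Measure.restrict_apply hS]
  rcases eq_or_ne a ⊤ with ha | ha
  · have : {t : ℝ | ENNReal.ofReal t < a} ∩ Set.Ioi 0 = Set.Ioi 0 := by
      ext t; simp [ha, ENNReal.ofReal_lt_top]
    rw [this, Real.volume_Ioi]; simp [ha]
  · have : {t : ℝ | ENNReal.ofReal t < a} ∩ Set.Ioi 0 = Set.Ioo 0 a.toReal := by
      ext t
      simp only [Set.mem_inter_iff, Set.mem_setOf_eq, Set.mem_Ioi, Set.mem_Ioo]
      constructor
      · rintro ⟨h1, h2⟩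
        exact ⟨h2, (ENNReal.ofReal_lt_iff_lt_toReal h2.le ha).mp h1⟩
      · rintro ⟨h1, h2⟩
        exact ⟨(ENNReal.ofReal_lt_iff_lt_toReal h1.le ha).mpr h2, h1⟩
    rw [this, Real.volume_Ioo, sub_zero, ENNReal.ofReal_toReal ha]

lemma aux_layercake {β : Type*} [MeasurableSpace β] (ν : Measure β) [SFinite ν]
    (h : β → ℝ≥0∞) (hh : Measurable h) :
    ∫⁻ x, h x ∂ν = ∫⁻ t in Set.Ioi (0:ℝ), ν {x | ENNReal.ofReal t < h x} := by
  have hmble : AEMeasurable (Function.uncurry fun (x : β) (t : ℝ) =>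
      ({t : ℝ | ENNReal.ofReal t < h x}).indicator (1 : ℝ → ℝ≥0∞) t)
      (ν.prod (volume.restrict (Set.Ioi 0))) := by
    have : (Function.uncurry fun (x : β) (t : ℝ) =>
        ({t : ℝ | ENNReal.ofReal t < h x}).indicator (1 : ℝ → ℝ≥0∞) t)
        = ({z : β × ℝ | ENNReal.ofReal z.2 < h z.1}).indicator (1 : β × ℝ → ℝ≥0∞) := by
      funext z
      simp [Function.uncurry, Set.indicator_apply]
    rw [this]
    exact ((measurable_const.indicator
      (measurableSet_lt (ENNReal.measurable_ofReal.comp measurable_snd)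
        (hh.comp measurable_fst)))).aemeasurable
  calc ∫⁻ x, h x ∂ν
      = ∫⁻ x, (∫⁻ t in Set.Ioi (0:ℝ),
          ({t : ℝ | ENNReal.ofReal t < h x}).indicator (1 : ℝ → ℝ≥0∞) t) ∂ν := by
        exact lintegral_congr fun x => (aux_ptwise (h x)).symm
    _ = ∫⁻ t in Set.Ioi (0:ℝ), ∫⁻ x,
          ({s : ℝ | ENNReal.ofReal s < h x}).indicator (1 : ℝ → ℝ≥0∞) t ∂ν :=
        lintegral_lintegral_swap hmble
    _ = ∫⁻ t in Set.Ioi (0:ℝ), ν {x | ENNReal.ofReal t < h x} := by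
        refine lintegral_congr fun t => ?_
        have : (fun x => ({s : ℝ | ENNReal.ofReal s < h x}).indicator (1 : ℝ → ℝ≥0∞) t)
            = ({x : β | ENNReal.ofReal t < h x}).indicator (1 : β → ℝ≥0∞) := by
          funext x; simp [Set.indicator_apply]
        rw [this, lintegral_indicator_one (measurableSet_lt measurable_const hh)]

lemma aux_key {Ω : Type*} [MeasurableSpace Ω] (μ : Measure Ω) [IsProbabilityMeasure μ]
    (g : ℝ → ℝ≥0∞) (hg : AntitoneOn g (Set.Ici 0)) (hgmeas : Measurable g)
    (p : Ω → ℝ) (hp : Measurable p) (hprange : ∀ ω, p ω ∈ Set.Icc (0 : ℝ) 1)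
    (hsup : ∀ t ∈ Set.Icc (0 : ℝ) 1, μ {ω | p ω ≤ t} ≤ ENNReal.ofReal t) :
    ∫⁻ ω, g (p ω) ∂μ ≤ ∫⁻ x in Set.Icc (0:ℝ) 1, g x := by
  rw [aux_layercake μ (fun ω => g (p ω)) (hgmeas.comp hp),
    aux_layercake (volume.restrict (Set.Icc 0 1)) g hgmeas]
  refine lintegral_mono fun t => ?_
  rw [Measure.restrict_apply (measurableSet_lt measurable_const hgmeas)]
  set a := ENNReal.ofReal t with ha
  set S := {x : ℝ | a < g x} ∩ Set.Icc 0 1 with hSdef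
  have hmem : ∀ ω, a < g (p ω) ↔ p ω ∈ S := fun ω =>
    ⟨fun h => ⟨h, hprange ω⟩, fun h => h.1⟩
  rcases S.eq_empty_or_nonempty with hS | hS
  · have : {ω | a < g (p ω)} = ∅ := by
      ext ω; simp only [Set.mem_setOf_eq, Set.mem_empty_iff_false, iff_false]
      intro h
      exact absurd ((hmem ω).mp h) (by simp [hS])
    simp [this]
  · have hbdd : BddAbove S := BddAbove.mono Set.inter_subset_right bddAbove_Icc
    set s := sSup S with hs
    obtain ⟨x₀, hx₀⟩ := hS
    have hs0 : 0 ≤ s := le_trans hx₀.2.1 (le_csSup hbdd hx₀)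
    have hs1 : s ≤ 1 := csSup_le ⟨x₀, hx₀⟩ fun x hx => hx.2.2
    have step1 : μ {ω | a < g (p ω)} ≤ μ {ω | p ω ≤ s} := by
      apply measure_mono
      intro ω hω
      exact le_csSup hbdd ((hmem ω).mp hω)
    have step2 : μ {ω | p ω ≤ s} ≤ ENNReal.ofReal s := hsup s ⟨hs0, hs1⟩
    have step3 : ENNReal.ofReal s ≤ volume S := by
      have hsub : Set.Ico 0 s ⊆ S := by
        intro y hy
        obtain ⟨x, hxS, hyx⟩ := exists_lt_of_lt_csSup ⟨x₀, hx₀⟩ hy.2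
        exact ⟨lt_of_lt_of_le hxS.1 (hg hy.1 hxS.2.1 hyx.le), hy.1,
          (lt_of_lt_of_le hy.2 hs1).le⟩
      calc ENNReal.ofReal s = volume (Set.Ico 0 s) := by rw [Real.volume_Ico, sub_zero]
        _ ≤ volume S := measure_mono hsub
    exact le_trans step1 (le_trans step2 step3)

/-- Calibration lemma: a p-to-e calibrator `f` (decreasing, `∫₀¹ f ≤ 1`) applied to a
rescaled super-uniform p-value satisfies `E[f(p/α)] ≤ 1/α`. -/
theorem stmt_9 {Ω : Type*} [MeasurableSpace Ω] (μ : Measure Ω) [IsProbabilityMeasure μ]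
    (f : ℝ → ℝ≥0∞) (hf : AntitoneOn f (Set.Ici 0)) (hfmeas : Measurable f)
    (hfint : ∫⁻ x in Set.Icc (0 : ℝ) 1, f x ≤ 1)
    (p : Ω → ℝ) (hp : Measurable p) (hprange : ∀ ω, p ω ∈ Set.Icc (0 : ℝ) 1)
    (hsup : ∀ t ∈ Set.Icc (0 : ℝ) 1, μ {ω | p ω ≤ t} ≤ ENNReal.ofReal t)
    (α : ℝ) (hα : α ∈ Set.Ioo (0 : ℝ) 1) :
    ∫⁻ ω, f (p ω / α) ∂μ ≤ ENNReal.ofReal (1 / α) := by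
  obtain ⟨hα0, hα1⟩ := hα
  set g : ℝ → ℝ≥0∞ := fun x => f (x / α) with hg
  have hgmeas : Measurable g := hfmeas.comp (measurable_id.div_const α)
  have hganti : AntitoneOn g (Set.Ici 0) := by
    intro x hx y hy hxy
    exact hf (Set.mem_Ici.mpr (div_nonneg hx hα0.le))
      (Set.mem_Ici.mpr (div_nonneg hy hα0.le)) ((div_le_div_iff_of_pos_right hα0).mpr hxy)
  have key := aux_key μ g hganti hgmeas p hp hprange hsup
  have hf1 : f 1 ≤ 1 := by
    have h1 : f 1 = ∫⁻ _x in Set.Icc (0:ℝ) 1, f 1 := by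
      rw [setLIntegral_const, Real.volume_Icc]; simp
    calc f 1 = ∫⁻ _x in Set.Icc (0:ℝ) 1, f 1 := h1
      _ ≤ ∫⁻ x in Set.Icc (0:ℝ) 1, f x := by
          refine setLIntegral_mono hfmeas fun x hx => ?_
          exact hf hx.1 (Set.mem_Ici.mpr (zero_le_one)) hx.2
      _ ≤ 1 := hfint
  have part1 : ∫⁻ x in Set.Icc (0:ℝ) α, g x ≤ ENNReal.ofReal α := by
    have hpre : (fun x : ℝ => x / α) ⁻¹' (Set.Icc 0 1) = Set.Icc 0 α := by
      ext x
      simp only [Set.mem_preimage, Set.mem_Icc]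
      constructor
      · rintro ⟨h1, h2⟩
        constructor
        · by_contra hx
          push_neg at hx
          nlinarith [div_neg_of_neg_of_pos hx hα0]
        · nlinarith [(div_le_one hα0).mp h2]
      · rintro ⟨h1, h2⟩
        exact ⟨div_nonneg h1 hα0.le, (div_le_one hα0).mpr h2⟩
    have hmap : Measure.map (fun x : ℝ => x / α) (volume.restrict (Set.Icc 0 α))
        = (ENNReal.ofReal α • volume).restrict (Set.Icc 0 1) := by
      rw [← hpre, ← Measure.restrict_map (measurable_div_const α) measurableSet_Icc]
      congr 1
      have heq : (fun x : ℝ => x / α) = (fun x => α⁻¹ * x) := by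
        funext x; rw [div_eq_inv_mul]
      rw [heq, Real.map_volume_mul_left (inv_ne_zero hα0.ne'), inv_inv, abs_of_pos hα0]
    calc ∫⁻ x in Set.Icc (0:ℝ) α, g x
        = ∫⁻ y, f y ∂(Measure.map (fun x : ℝ => x / α) (volume.restrict (Set.Icc 0 α))) :=
          (lintegral_map hfmeas (measurable_div_const α)).symm
      _ = ENNReal.ofReal α * ∫⁻ y in Set.Icc (0:ℝ) 1, f y := by
          rw [hmap, Measure.restrict_smul, lintegral_smul_measure, smul_eq_mul]
      _ ≤ ENNReal.ofReal α * 1 := mul_le_mul_right hfint _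
      _ = ENNReal.ofReal α := mul_one _
  have part2 : ∫⁻ x in Set.Ioc α 1, g x ≤ ENNReal.ofReal (1 - α) := by
    calc ∫⁻ x in Set.Ioc α 1, g x ≤ ∫⁻ _x in Set.Ioc α 1, f 1 := by
          refine setLIntegral_mono measurable_const fun x hx => ?_
          exact hf (Set.mem_Ici.mpr zero_le_one)
            (Set.mem_Ici.mpr (div_nonneg (hα0.le.trans hx.1.le) hα0.le))
            ((one_le_div hα0).mpr hx.1.le)
      _ = f 1 * volume (Set.Ioc α 1) := setLIntegral_const _ _
      _ ≤ 1 * ENNReal.ofReal (1 - α) := by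
          rw [Real.volume_Ioc]; exact mul_le_mul' hf1 le_rfl
      _ = ENNReal.ofReal (1 - α) := one_mul _
  have hsplit : Set.Icc (0:ℝ) 1 = Set.Icc 0 α ∪ Set.Ioc α 1 :=
    (Set.Icc_union_Ioc_eq_Icc hα0.le hα1.le).symm
  have hdisj : Disjoint (Set.Icc (0:ℝ) α) (Set.Ioc α 1) := by
    rw [Set.disjoint_left]
    intro x hx hx'
    exact absurd hx.2 (not_le.mpr hx'.1)
  calc ∫⁻ ω, f (p ω / α) ∂μ = ∫⁻ ω, g (p ω) ∂μ := rfl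
    _ ≤ ∫⁻ x in Set.Icc (0:ℝ) 1, g x := key
    _ = (∫⁻ x in Set.Icc (0:ℝ) α, g x) + ∫⁻ x in Set.Ioc α 1, g x := by
        rw [hsplit, lintegral_union measurableSet_Ioc hdisj]
    _ ≤ ENNReal.ofReal α + ENNReal.ofReal (1 - α) := add_le_add part1 part2
    _ = 1 := by rw [← ENNReal.ofReal_add hα0.le (by linarith)]; norm_num
    _ ≤ ENNReal.ofReal (1 / α) := by
        rw [ENNReal.one_le_ofReal]
        rw [le_div_iff₀ hα0]; linarith
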